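/- Let V : Ω → ℂ be a (continuously differentiable) function on a domain Ω ⊂ ℝ³ that is convex in the direction of the line L_u = {(x,y,z) : x + y Re a_u + z Re b_u = 0, y Im a_u + z Im b_u = 0}, and suppose at least one of a_u, b_u ∈ ℂ \ ℝ. If V satisfies ∂V/∂y = a_u ∂V/∂x and ∂V/∂z = b_u ∂V/∂x in Ω, then there exists a function F holomorphic in D_u = {x + y a_u + z b_u : (x,y,z) ∈ Ω} such that V(x,y,z) = F(x + y a_u + z b_u) for all (x,y,z) ∈ Ω. -/

import Mathlib

open Set

/-- Lemma 6: a continuously differentiable `V : Ω → ℂ`, on a domain `Ω ⊆ ℝ³`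
convex in the direction of the line `L_u`, satisfying
`∂V/∂y = a ∂V/∂x` and `∂V/∂z = b ∂V/∂x` (with `a ∉ ℝ` or `b ∉ ℝ`), is a
holomorphic function of the variable `ξ = x + y a + z b`. -/
theorem lemma_six (a b : ℂ) (hab : a.im ≠ 0 ∨ b.im ≠ 0)
    (Ω : Set (ℝ × ℝ × ℝ)) (hΩo : IsOpen Ω) (hΩc : IsConnected Ω)
    (L : Set (ℝ × ℝ × ℝ))
    (hL : L = {p : ℝ × ℝ × ℝ |
      p.1 + p.2.1 * a.re + p.2.2 * b.re = 0 ∧ p.2.1 * a.im + p.2.2 * b.im = 0})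
    -- `Ω` is convex in the direction of `L`
    (hconv : ∀ p ∈ Ω, ∀ q ∈ Ω, q - p ∈ L → segment ℝ p q ⊆ Ω)
    (ξ : ℝ × ℝ × ℝ → ℂ)
    (hξ : ∀ p : ℝ × ℝ × ℝ, ξ p = (p.1 : ℂ) + (p.2.1 : ℂ) * a + (p.2.2 : ℂ) * b)
    (V : ℝ × ℝ × ℝ → ℂ) (hV : ContDiffOn ℝ 1 V Ω)
    (hCR1 : ∀ p ∈ Ω, fderiv ℝ V p (0, 1, 0) = a * fderiv ℝ V p (1, 0, 0))
    (hCR2 : ∀ p ∈ Ω, fderiv ℝ V p (0, 0, 1) = b * fderiv ℝ V p (1, 0, 0)) :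
    ∃ F : ℂ → ℂ, DifferentiableOn ℂ F (ξ '' Ω) ∧ ∀ p ∈ Ω, V p = F (ξ p) := by
  classical
  -- differentiability at points of Ω
  have hV' : ∀ r ∈ Ω, HasFDerivAt V (fderiv ℝ V r) r := fun r hr =>
    ((hV.contDiffAt (hΩo.mem_nhds hr)).differentiableAt one_ne_zero).hasFDerivAt
  -- the derivative formula
  have hder : ∀ r ∈ Ω, ∀ v : ℝ × ℝ × ℝ,
      fderiv ℝ V r v = ((v.1 : ℂ) + (v.2.1 : ℂ) * a + (v.2.2 : ℂ) * b) * fderiv ℝ V r (1,0,0) := by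
    intro r hr v
    have hv : v = v.1 • ((1:ℝ),(0:ℝ),(0:ℝ)) + v.2.1 • ((0:ℝ),(1:ℝ),(0:ℝ))
        + v.2.2 • ((0:ℝ),(0:ℝ),(1:ℝ)) := by
      simp [Prod.ext_iff]
    conv_lhs => rw [hv]
    rw [map_add, map_add, map_smul, map_smul, map_smul, hCR1 r hr, hCR2 r hr]
    simp only [smul_eq_mul, Complex.real_smul]
    ring
  -- V is constant on fibers of ξ
  have hconst : ∀ p ∈ Ω, ∀ q ∈ Ω, ξ p = ξ q → V p = V q := by
    intro p hp q hq hpq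
    have hre := congrArg Complex.re hpq
    have him := congrArg Complex.im hpq
    simp only [hξ, Complex.add_re, Complex.add_im, Complex.mul_re, Complex.mul_im,
      Complex.ofReal_re, Complex.ofReal_im, zero_mul, mul_zero, sub_zero, add_zero,
      zero_add] at hre him
    have hLmem : q - p ∈ L := by
      rw [hL]
      constructor
      · simp only [Prod.fst_sub, Prod.snd_sub]; linarith
      · simp only [Prod.fst_sub, Prod.snd_sub]; linarith
    have hseg : segment ℝ p q ⊆ Ω := hconv p hp q hq hLmem
    have hξseg : ∀ y ∈ segment ℝ p q, ξ y = ξ p := by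
      rintro y ⟨u, v, hu, hv, huv, rfl⟩
      have hc : (u:ℂ) + v = 1 := by exact_mod_cast huv
      have hpq' := hpq
      rw [hξ, hξ] at hpq'
      simp only [hξ, Prod.fst_add, Prod.snd_add, Prod.smul_fst, Prod.smul_snd, smul_eq_mul]
      push_cast
      linear_combination (-(v:ℂ)) * hpq' + ((p.1:ℂ) + (p.2.1:ℂ) * a + (p.2.2:ℂ) * b) * hc
    have hzero : ∀ x ∈ segment ℝ p q,
        HasFDerivWithinAt V (0 : (ℝ × ℝ × ℝ) →L[ℝ] ℂ) (segment ℝ p q) x := by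
      intro x hx
      have hxΩ := hseg hx
      have h1 : HasFDerivWithinAt V (fderiv ℝ V x) (segment ℝ p q) x :=
        (hV' x hxΩ).hasFDerivWithinAt
      rw [HasFDerivWithinAt, hasFDerivAtFilter_iff_isLittleO] at h1 ⊢
      refine h1.congr' ?_ Filter.EventuallyEq.rfl
      filter_upwards [Filter.prod_mem_prod self_mem_nhdsWithin (Filter.mem_pure.2 (mem_singleton x))]
      rintro ⟨y, z⟩ ⟨hy, hz⟩
      rw [mem_singleton_iff] at hz
      rw [hz]
      have hv0 : fderiv ℝ V x (y - x) = 0 := by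
        rw [hder x hxΩ]
        have hE : (((y - x).1 : ℂ) + ((y - x).2.1 : ℂ) * a + ((y - x).2.2 : ℂ) * b)
            = ξ y - ξ x := by
          simp only [hξ, Prod.fst_sub, Prod.snd_sub]
          push_cast; ring
        rw [hE, hξseg y hy, hξseg x hx, sub_self, zero_mul]
      simp [hv0]
    have hb := (convex_segment p q).norm_image_sub_le_of_norm_hasFDerivWithin_le (C := 0)
      hzero (fun x _ => by simp) (left_mem_segment ℝ p q) (right_mem_segment ℝ p q)
    have h0 : ‖V q - V p‖ ≤ 0 := by simpa using hb
    have : V q - V p = 0 := by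
      rw [← norm_eq_zero]
      exact le_antisymm h0 (norm_nonneg _)
    exact (sub_eq_zero.mp this).symm
  -- a continuous linear right inverse of the linear form underlying ξ
  obtain ⟨σ, hσ⟩ : ∃ σ : ℂ →L[ℝ] ℝ × ℝ × ℝ,
      ∀ w : ℂ, (((σ w).1 : ℂ) + ((σ w).2.1 : ℂ) * a + ((σ w).2.2 : ℂ) * b) = w := by
    rcases hab with ha | hb
    · refine ⟨(Complex.reCLM - (a.re / a.im) • Complex.imCLM).prod
        ((a.im⁻¹ • Complex.imCLM).prod 0), ?_⟩
      intro w
      apply Complex.ext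
      · simp [Complex.add_re, Complex.mul_re]
        field_simp
        ring
      · simp [Complex.add_im, Complex.mul_im]
        field_simp
    · refine ⟨(Complex.reCLM - (b.re / b.im) • Complex.imCLM).prod
        (((0 : ℂ →L[ℝ] ℝ)).prod (b.im⁻¹ • Complex.imCLM)), ?_⟩
      intro w
      apply Complex.ext
      · simp [Complex.add_re, Complex.mul_re]
        field_simp
        ring
      · simp [Complex.add_im, Complex.mul_im]
        field_simp
  set F : ℂ → ℂ := fun w => if h : w ∈ ξ '' Ω then V h.choose else 0 with hFdef
  have hFval : ∀ w, ∀ h : w ∈ ξ '' Ω, F w = V h.choose := by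
    intro w h
    simp only [hFdef, dif_pos h]
  refine ⟨F, ?_, ?_⟩
  · -- differentiability
    rintro w₀ ⟨p₀, hp₀, rfl⟩
    set γ : ℂ → ℝ × ℝ × ℝ := fun w => (p₀ - σ (ξ p₀)) + σ w with hγdef
    have hγ0 : γ (ξ p₀) = p₀ := by simp [hγdef]
    have hξγ : ∀ w, ξ (γ w) = w := by
      intro w
      rw [hξ]
      simp only [hγdef, Prod.fst_add, Prod.snd_add, Prod.fst_sub, Prod.snd_sub]
      push_cast
      linear_combination hσ w - hσ (ξ p₀) - hξ p₀
    have hγcont : Continuous γ := continuous_const.add σ.continuous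
    have hU : γ ⁻¹' Ω ∈ nhds (ξ p₀) :=
      (hΩo.preimage hγcont).mem_nhds (by simp [mem_preimage, hγ0, hp₀])
    have hFG : F =ᶠ[nhds (ξ p₀)] (V ∘ γ) := by
      filter_upwards [hU] with w hw
      have hm : w ∈ ξ '' Ω := ⟨γ w, hw, hξγ w⟩
      rw [hFval w hm]
      exact hconst _ hm.choose_spec.1 _ hw (by rw [hm.choose_spec.2, hξγ w])
    have hγd : HasFDerivAt γ (σ : ℂ →L[ℝ] ℝ × ℝ × ℝ) (ξ p₀) := σ.hasFDerivAt.const_add _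
    have hVd : HasFDerivAt V (fderiv ℝ V p₀) (γ (ξ p₀)) := hγ0.symm ▸ hV' p₀ hp₀
    have hcomp : HasFDerivAt (V ∘ γ) ((fderiv ℝ V p₀).comp σ) (ξ p₀) :=
      hVd.comp _ hγd
    set c : ℂ := fderiv ℝ V p₀ (1,0,0) with hc
    have heq : ((c • (1 : ℂ →L[ℂ] ℂ)).restrictScalars ℝ : ℂ →L[ℝ] ℂ)
        = (fderiv ℝ V p₀).comp σ := by
      apply ContinuousLinearMap.ext
      intro w
      simp only [ContinuousLinearMap.coe_restrictScalars', ContinuousLinearMap.coe_comp',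
        Function.comp_apply, ContinuousLinearMap.smul_apply, ContinuousLinearMap.one_apply,
        smul_eq_mul]
      rw [hder p₀ hp₀, hσ w]
      ring
    have h2 : HasFDerivAt (V ∘ γ) (c • (1 : ℂ →L[ℂ] ℂ)) (ξ p₀) :=
      hasFDerivAt_of_restrictScalars ℝ hcomp heq
    have h3 : HasFDerivAt F (c • (1 : ℂ →L[ℂ] ℂ)) (ξ p₀) :=
      h2.congr_of_eventuallyEq hFG
    exact h3.differentiableAt.differentiableWithinAt
  · intro p hp
    have hm : ξ p ∈ ξ '' Ω := ⟨p, hp, rfl⟩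
    rw [hFval _ hm]
    exact hconst p hp _ hm.choose_spec.1 hm.choose_spec.2.symm
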